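/- For b₋ > 0, b₊ ≥ b₋, λ ≥ 0 and complex s with Re s > 1/2, one has ((λ+b₊)² - b₋²)^{-s} = (λ+b₁)^{-s}(λ+b₂)^{-s} where b₁ = b₊+b₋, b₂ = b₊-b₋; moreover (2b₋)^{1/2-s} √π / Γ(s) · ∫_0^∞ e^{-(λ+b₊)t} I_{s-1/2}(b₋ t) t^{s-1/2} dt = ((λ+b₁)(λ+b₂))^{-s}, where I_ν is the modified Bessel function of the first kind. -/

import Mathlib

open MeasureTheory Complex

/-- The modified Bessel function of the first kind,
I_ν(x) = Σ_n (x/2)^{2n+ν} / (n! Γ(ν+n+1)), for x > 0 (principal powers). -/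
noncomputable def besselI (ν : ℂ) (x : ℝ) : ℂ :=
  ∑' n : ℕ, ((x / 2 : ℝ) : ℂ) ^ (2 * (n : ℂ) + ν) /
    ((Nat.factorial n : ℂ) * Complex.Gamma (ν + n + 1))

open Set Filter

namespace BRAux

lemma cpow_pos_eq_exp {r : ℝ} (hr : 0 < r) (w : ℂ) :
    ((r : ℂ)) ^ w = Complex.exp (w * Real.log r) := by
  rw [cpow_def_of_ne_zero (by exact_mod_cast hr.ne') w, ← Complex.ofReal_log hr.le, mul_comm]

lemma norm_cpow_exp {w : ℂ} {r t : ℝ} (ht : 0 < t) :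
    ‖(t:ℂ) ^ (w - 1) * Complex.exp (-(r * t))‖ = t ^ (w.re - 1) * Real.exp (-(r * t)) := by
  rw [norm_mul, norm_cpow_eq_rpow_re_of_pos ht,
    Complex.norm_exp]
  norm_num

lemma integrableOn_rpow_exp {c : ℝ} (hc : -1 < c) {r : ℝ} (hr : 0 < r) :
    IntegrableOn (fun t : ℝ => t ^ c * Real.exp (-(r * t))) (Ioi 0) := by
  have := integrableOn_rpow_mul_exp_neg_mul_rpow hc zero_lt_one hr
  simpa [Real.rpow_one, neg_mul] using this

lemma integrableOn_cpow_exp {w : ℂ} (hw : 0 < w.re) {r : ℝ} (hr : 0 < r) :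
    IntegrableOn (fun t : ℝ => (t:ℂ) ^ (w - 1) * Complex.exp (-(r * t))) (Ioi 0) := by
  apply Integrable.mono' (integrableOn_rpow_exp (c := w.re - 1) (by linarith) hr)
  · apply ContinuousOn.aestronglyMeasurable _ measurableSet_Ioi
    apply ContinuousOn.mul
    · intro t ht
      apply ContinuousAt.continuousWithinAt
      exact (continuousAt_cpow_const (Or.inl (by simpa using ht))).comp
        Complex.continuous_ofReal.continuousAt
    · exact (Complex.continuous_exp.comp (by continuity)).continuousOn
  · filter_upwards [ae_restrict_mem measurableSet_Ioi] with t ht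
    rw [norm_cpow_exp ht]

lemma integral_norm_cpow_exp {w : ℂ} (hw : 0 < w.re) {r : ℝ} (hr : 0 < r) :
    ∫ t in Ioi (0:ℝ), ‖(t:ℂ) ^ (w - 1) * Complex.exp (-(r * t))‖
      = (1 / r) ^ w.re * Real.Gamma w.re := by
  rw [← Real.integral_rpow_mul_exp_neg_mul_Ioi hw hr]
  exact setIntegral_congr_fun measurableSet_Ioi (fun t ht => norm_cpow_exp ht)

lemma tendsto_ratio (c d : ℝ) :
    Tendsto (fun n : ℕ => ((n:ℝ) + c) / ((n:ℝ) + d)) atTop (nhds 1) := by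
  have h1 : Tendsto (fun n : ℕ => (c - d) / ((n:ℝ) + d)) atTop (nhds 0) := by
    apply Tendsto.div_atTop tendsto_const_nhds
    exact tendsto_atTop_add_const_right _ d tendsto_natCast_atTop_atTop
  have h2 := h1.const_add 1
  rw [add_zero] at h2
  apply h2.congr'
  have hd : ∀ᶠ n : ℕ in atTop, (0:ℝ) < (n:ℝ) + d :=
    (tendsto_atTop_add_const_right _ d tendsto_natCast_atTop_atTop).eventually_gt_atTop 0
  filter_upwards [hd] with n hn
  field_simp
  ring
end BRAux

namespace BRAux
open scoped Nat

lemma cexp_tsum (z : ℂ) : Complex.exp z = ∑' n : ℕ, z ^ n / n.factorial := by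
  rw [Complex.exp_eq_exp_ℂ, NormedSpace.exp_eq_tsum_div]

lemma summable_of_ratio_tendsto {f : ℕ → ℝ} (hf : ∀ n, 0 ≤ f n) {q : ℕ → ℝ} {L : ℝ}
    (hL : L < 1) (hq : Tendsto q atTop (nhds L)) (hfq : ∀ᶠ n in atTop, f (n+1) ≤ q n * f n) :
    Summable f := by
  have hev : ∀ᶠ n in atTop, q n ≤ (L+1)/2 := hq.eventually_le_const (by linarith)
  apply summable_of_ratio_norm_eventually_le (r := (L+1)/2) (by linarith)
  filter_upwards [hev, hfq] with n h1 h2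
  rw [Real.norm_of_nonneg (hf _), Real.norm_of_nonneg (hf _)]
  calc f (n+1) ≤ q n * f n := h2
  _ ≤ (L+1)/2 * f n := mul_le_mul_of_nonneg_right h1 (hf n)

lemma binom {x : ℝ} (hx0 : 0 ≤ x) (hx1 : x < 1) {s : ℂ} (hs : 0 < s.re) :
    ∑' n : ℕ, (x:ℂ) ^ n * Complex.Gamma (s + n) / (n.factorial : ℂ)
      = ((1 - x : ℝ):ℂ) ^ (-s) * Complex.Gamma s := by
  set h : ℕ → ℝ → ℂ := fun n u => ((x:ℂ) ^ n / (n.factorial : ℂ)) *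
    ((u:ℂ) ^ (s + n - 1) * Complex.exp (-((1:ℝ) * u))) with hh
  have hre : ∀ n : ℕ, 0 < (s + (n:ℂ)).re := fun n => by
    simp only [Complex.add_re, Complex.natCast_re]; positivity
  have hint : ∀ n, IntegrableOn (h n) (Ioi 0) := fun n =>
    (integrableOn_cpow_exp (hre n) one_pos).const_mul _
  have hval : ∀ n, ∫ u in Ioi (0:ℝ), h n u
      = (x:ℂ) ^ n * Complex.Gamma (s + n) / (n.factorial : ℂ) := by
    intro n
    rw [hh]
    simp only
    rw [MeasureTheory.integral_const_mul, integral_cpow_mul_exp_neg_mul_Ioi (hre n) one_pos]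
    push_cast
    norm_num
    ring
  have hnre : ∀ n : ℕ, (s + (n:ℂ)).re = s.re + n := fun n => by
    simp [Complex.add_re]
  have hnorm : ∀ n, ∫ u in Ioi (0:ℝ), ‖h n u‖
      = x ^ n * Real.Gamma (s.re + n) / (n.factorial : ℝ) := by
    intro n
    have e : ∀ u ∈ Ioi (0:ℝ), ‖h n u‖ = ‖(x:ℂ) ^ n / (n.factorial : ℂ)‖ *
        ‖(u:ℂ) ^ (s + n - 1) * Complex.exp (-((1:ℝ) * u))‖ := by
      intro u _; rw [hh]; simp only [norm_mul]
    rw [setIntegral_congr_fun measurableSet_Ioi e,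
      MeasureTheory.integral_const_mul, integral_norm_cpow_exp (hre n) one_pos, hnre n]
    rw [norm_div]
    simp [_root_.abs_of_nonneg hx0]
    ring
  have hsum : Summable fun n => ∫ u in Ioi (0:ℝ), ‖h n u‖ := by
    rw [funext hnorm]
    apply summable_of_ratio_tendsto (L := x)
      (f := fun n => x ^ n * Real.Gamma (s.re + n) / (n.factorial : ℝ))
      (q := fun n => x * ((n + s.re) / (n + 1)))
      (fun n => by positivity) hx1
    · simpa using (tendsto_ratio s.re 1).const_mul x
    · apply Eventually.of_forall
      intro n
      have hne : s.re + n ≠ 0 := by positivity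
      have : Real.Gamma (s.re + (n+1)) = (s.re + n) * Real.Gamma (s.re + n) := by
        rw [show s.re + ((n:ℝ)+1) = (s.re + n) + 1 by ring, Real.Gamma_add_one hne]
      apply le_of_eq
      rw [Nat.cast_add, Nat.cast_one, this]
      rw [Nat.factorial_succ]
      push_cast
      field_simp
      ring
  have hswap := MeasureTheory.integral_tsum_of_summable_integral_norm hint hsum
  rw [funext hval] at hswap
  rw [hswap]
  -- now compute ∫ ∑' h n
  have hpt : ∀ u ∈ Ioi (0:ℝ), (∑' n, h n u)
      = (u:ℂ) ^ (s - 1) * Complex.exp (-(((1 - x : ℝ):ℂ) * u)) := by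
    intro u hu
    rw [mem_Ioi] at hu
    have hu0 : (u:ℂ) ≠ 0 := by exact_mod_cast hu.ne'
    have : ∀ n : ℕ, h n u = ((u:ℂ) ^ (s - 1) * Complex.exp (-((1:ℝ) * u)))
        * (((x:ℂ) * u) ^ n / (n.factorial : ℂ)) := by
      intro n
      rw [hh]
      simp only
      rw [show s + (n:ℂ) - 1 = s - 1 + n by ring, Complex.cpow_add _ _ hu0,
        Complex.cpow_natCast, mul_pow]
      ring
    rw [funext this, tsum_mul_left, ← cexp_tsum, mul_assoc, ← Complex.exp_add]
    congr 2
    push_cast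
    ring
  rw [setIntegral_congr_fun measurableSet_Ioi hpt,
    integral_cpow_mul_exp_neg_mul_Ioi hs (by linarith : (0:ℝ) < 1 - x)]
  rw [show ((1:ℂ) / ((1 - x : ℝ) : ℂ)) = (((1 - x:ℝ):ℂ))⁻¹ by rw [one_div]]
  rw [Complex.inv_cpow _ _ (by rw [Complex.arg_ofReal_of_nonneg (by linarith)]; exact Real.pi_ne_zero.symm), ← Complex.cpow_neg]
end BRAux

namespace BRAux
open scoped Nat

set_option maxHeartbeats 1000000 in
lemma key {a b : ℝ} (hb : 0 < b) (hab : b < a) {s : ℂ} (hs : 1/2 < s.re) :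
    ((2*b : ℝ):ℂ) ^ ((1:ℂ)/2 - s) * (Real.sqrt Real.pi : ℂ) / Complex.Gamma s *
      (∫ t in Set.Ioi (0:ℝ),
        Complex.exp (-((a:ℝ):ℂ) * t) * besselI (s - 1/2) (b * t) * (t:ℂ) ^ (s - 1/2))
    = (((a + b) * (a - b) : ℝ):ℂ) ^ (-s) := by
  have ha : 0 < a := hb.trans hab
  set ν : ℂ := s - 1/2 with hν
  set σ : ℝ := s.re with hσ
  have hσ2 : 1/2 < σ := hs
  -- the terms
  set g : ℕ → ℝ → ℂ := fun n t => Complex.exp (-((a:ℝ):ℂ) * t) *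
      (((b * t / 2 : ℝ):ℂ) ^ (2 * (n:ℂ) + ν) / ((n.factorial : ℂ) * Complex.Gamma (ν + n + 1)))
      * (t:ℂ) ^ ν with hg
  set C : ℕ → ℂ := fun n => ((b / 2 : ℝ):ℂ) ^ (2 * (n:ℂ) + ν) /
      ((n.factorial : ℂ) * Complex.Gamma (ν + n + 1)) with hC
  set w : ℕ → ℂ := fun n => 2 * (n:ℂ) + 2 * s with hw
  have hwre : ∀ n : ℕ, (w n).re = 2 * n + 2 * σ := fun n => by
    simp [hw, Complex.add_re, Complex.mul_re]; rfl
  have hwpos : ∀ n : ℕ, 0 < (w n).re := fun n => by rw [hwre]; positivity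
  have hGne : ∀ n : ℕ, Complex.Gamma (ν + n + 1) ≠ 0 := fun n => by
    apply Complex.Gamma_ne_zero_of_re_pos
    simp only [hν, Complex.add_re, Complex.sub_re, Complex.one_re, Complex.natCast_re,
      Complex.div_re]
    norm_num
    linarith
  -- step B : g n equals constant times gamma integrand
  have hB : ∀ n : ℕ, ∀ t ∈ Set.Ioi (0:ℝ),
      g n t = C n * ((t:ℂ) ^ (w n - 1) * Complex.exp (-(a * t))) := by
    intro n t ht
    rw [Set.mem_Ioi] at ht
    have ht0 : (t:ℂ) ≠ 0 := by exact_mod_cast ht.ne'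
    have hcast : ((b * t / 2 : ℝ):ℂ) = ((b/2 : ℝ):ℂ) * ((t:ℝ):ℂ) := by push_cast; ring
    rw [hg, hC]
    simp only
    rw [hcast, mul_cpow_ofReal_nonneg (by positivity) ht.le]
    have ht2 : (t:ℂ) ^ (2 * (n:ℂ) + ν) * (t:ℂ) ^ ν = (t:ℂ) ^ (w n - 1) := by
      rw [← Complex.cpow_add _ _ ht0]
      congr 1
      rw [hw, hν]; ring
    simp only [neg_mul]
    rw [← ht2]
    ring
  -- integrability
  have hint : ∀ n : ℕ, IntegrableOn (g n) (Set.Ioi 0) := by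
    intro n
    exact IntegrableOn.congr_fun ((integrableOn_cpow_exp (hwpos n) ha).const_mul (C n))
      (fun t ht => (hB n t ht).symm) measurableSet_Ioi
  -- integral values
  have hval : ∀ n : ℕ, ∫ t in Set.Ioi (0:ℝ), g n t
      = C n * ((1 / (a:ℂ)) ^ (w n) * Complex.Gamma (w n)) := by
    intro n
    rw [setIntegral_congr_fun measurableSet_Ioi (hB n), MeasureTheory.integral_const_mul,
      integral_cpow_mul_exp_neg_mul_Ioi (hwpos n) ha]
  -- norm integral values
  have hCnorm : ∀ n : ℕ, ‖C n‖ = (b/2) ^ (2 * (n:ℝ) + ν.re) /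
      ((n.factorial : ℝ) * ‖Complex.Gamma (ν + n + 1)‖) := by
    intro n
    rw [hC]
    simp only [norm_div, norm_mul,
      norm_cpow_eq_rpow_re_of_pos (by positivity : (0:ℝ) < b/2)]
    congr 2
    · simp [Complex.add_re, Complex.mul_re]
    · simp
  have hnorm : ∀ n : ℕ, ∫ t in Set.Ioi (0:ℝ), ‖g n t‖
      = ‖C n‖ * ((1/a) ^ (2 * (n:ℝ) + 2 * σ) * Real.Gamma (2 * n + 2 * σ)) := by
    intro n
    have e : ∀ t ∈ Set.Ioi (0:ℝ), ‖g n t‖ = ‖C n‖ *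
        ‖(t:ℂ) ^ (w n - 1) * Complex.exp (-(a * t))‖ := by
      intro t ht; rw [hB n t ht, norm_mul]
    rw [setIntegral_congr_fun measurableSet_Ioi e, MeasureTheory.integral_const_mul,
      integral_norm_cpow_exp (hwpos n) ha, hwre n]
  have hνre : ν.re = σ - 1/2 := by
    rw [hν, hσ]; simp [Complex.sub_re]
  have habs_ne : ∀ n : ℕ, ‖Complex.Gamma (ν + n + 1)‖ ≠ 0 :=
    fun n => (norm_ne_zero_iff.mpr (hGne n))
  set F : ℕ → ℝ := fun n => (b/2) ^ (2 * (n:ℝ) + ν.re) /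
      ((n.factorial : ℝ) * ‖Complex.Gamma (ν + n + 1)‖) *
      ((1/a) ^ (2 * (n:ℝ) + 2 * σ) * Real.Gamma (2 * n + 2 * σ)) with hF
  have hFnonneg : ∀ n, 0 ≤ F n := by
    intro n
    rw [hF]
    have h1 : 0 ≤ (b/2) ^ (2 * (n:ℝ) + ν.re) := Real.rpow_nonneg (by positivity) _
    have h2 : 0 ≤ (1/a) ^ (2 * (n:ℝ) + 2 * σ) := Real.rpow_nonneg (by positivity) _
    have h3 : 0 ≤ Real.Gamma (2 * n + 2 * σ) :=
      Real.Gamma_nonneg_of_nonneg (by positivity)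
    have h4 : (0:ℝ) < n.factorial := by exact_mod_cast n.factorial_pos
    have h5 : 0 ≤ ‖Complex.Gamma (ν + n + 1)‖ := norm_nonneg _
    positivity
  have hzre : ∀ n : ℕ, (ν + (n:ℂ) + 1).re = σ + n + 1/2 := by
    intro n
    simp [Complex.add_re, hνre]
    ring
  have hGrec : ∀ n : ℕ, Complex.Gamma (ν + ((n+1:ℕ):ℂ) + 1)
      = (ν + n + 1) * Complex.Gamma (ν + n + 1) := by
    intro n
    have h1 : (ν + ((n+1:ℕ):ℂ) + 1) = (ν + n + 1) + 1 := by push_cast; ring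
    rw [h1, Complex.Gamma_add_one _ ?_]
    intro h
    have := congrArg Complex.re h
    rw [hzre n] at this
    simp at this
    linarith
  have habs_ge : ∀ n : ℕ, (n:ℝ) + 1 ≤ ‖ν + n + 1‖ := by
    intro n
    calc (n:ℝ) + 1 ≤ (ν + n + 1).re := by rw [hzre n]; linarith
    _ ≤ ‖ν + n + 1‖ := Complex.re_le_norm _
  have habz_pos : ∀ n : ℕ, 0 < ‖ν + n + 1‖ := by
    intro n
    calc (0:ℝ) < (n:ℝ) + 1 := by positivity
    _ ≤ _ := habs_ge n
  set q : ℕ → ℝ := fun n => ((b/2)^2 * (1/a)^2) * ((2*(n:ℝ)+2*σ)/((n:ℝ)+1))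
      * ((2*(n:ℝ)+1+2*σ)/((n:ℝ)+1)) with hqdef
  have hFrec : ∀ n : ℕ, F (n+1)
      = ((b/2)^2 * (1/a)^2) * ((2*(n:ℝ)+2*σ) * (2*(n:ℝ)+1+2*σ))
        / (((n:ℝ)+1) * ‖ν + n + 1‖) * F n := by
    intro n
    rw [hF]
    simp only
    have e1 : (b/2) ^ (2 * ((n+1:ℕ):ℝ) + ν.re)
        = (b/2) ^ (2 * (n:ℝ) + ν.re) * (b/2)^2 := by
      rw [← Real.rpow_natCast (b/2) 2, ← Real.rpow_add (by positivity)]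
      congr 1
      push_cast; ring
    have e2 : (1/a) ^ (2 * ((n+1:ℕ):ℝ) + 2 * σ)
        = (1/a) ^ (2 * (n:ℝ) + 2 * σ) * (1/a)^2 := by
      rw [← Real.rpow_natCast (1/a) 2, ← Real.rpow_add (by positivity)]
      congr 1
      push_cast; ring
    have e3 : Real.Gamma (2 * ((n+1:ℕ):ℝ) + 2 * σ)
        = (2*(n:ℝ)+1+2*σ) * ((2*(n:ℝ)+2*σ) * Real.Gamma (2 * (n:ℝ) + 2 * σ)) := by
      have g1 : Real.Gamma ((2 * (n:ℝ) + 2 * σ) + 1)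
          = (2 * (n:ℝ) + 2 * σ) * Real.Gamma (2 * (n:ℝ) + 2 * σ) :=
        Real.Gamma_add_one (by positivity)
      have g2 : Real.Gamma ((2 * (n:ℝ) + 1 + 2 * σ) + 1)
          = (2 * (n:ℝ) + 1 + 2 * σ) * Real.Gamma (2 * (n:ℝ) + 1 + 2 * σ) :=
        Real.Gamma_add_one (by positivity)
      rw [show 2 * ((n+1:ℕ):ℝ) + 2 * σ = (2 * (n:ℝ) + 1 + 2 * σ) + 1 by push_cast; ring, g2,
        show 2 * (n:ℝ) + 1 + 2 * σ = (2 * (n:ℝ) + 2 * σ) + 1 by ring, g1]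
    have e4 : ((n+1:ℕ).factorial : ℝ) = ((n:ℝ)+1) * (n.factorial : ℝ) := by
      rw [Nat.factorial_succ]; push_cast; ring
    have e5 : ‖Complex.Gamma (ν + ((n+1:ℕ):ℂ) + 1)‖
        = ‖ν + n + 1‖ * ‖Complex.Gamma (ν + n + 1)‖ := by
      rw [hGrec n, norm_mul]
    rw [e1, e2, e3, e4, e5]
    have hfne : ((n.factorial : ℝ)) ≠ 0 := by exact_mod_cast n.factorial_pos.ne'
    have hn1 : ((n:ℝ)+1) ≠ 0 := by positivity
    simp only [div_eq_mul_inv, mul_inv]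
    ring
  have hineq : ∀ n : ℕ, F (n+1) ≤ q n * F n := by
    intro n
    rw [hFrec n, hqdef]
    simp only
    have hnum : 0 ≤ ((b/2)^2 * (1/a)^2) * ((2*(n:ℝ)+2*σ) * (2*(n:ℝ)+1+2*σ)) := by positivity
    have hd1 : 0 < ((n:ℝ)+1) * ((n:ℝ)+1) := by positivity
    have hd2 : ((n:ℝ)+1) * ((n:ℝ)+1) ≤ ((n:ℝ)+1) * ‖ν + n + 1‖ :=
      mul_le_mul_of_nonneg_left (habs_ge n) (by positivity)
    apply mul_le_mul_of_nonneg_right _ (hFnonneg n)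
    calc ((b/2)^2 * (1/a)^2) * ((2*(n:ℝ)+2*σ) * (2*(n:ℝ)+1+2*σ))
        / (((n:ℝ)+1) * ‖ν + n + 1‖)
        ≤ ((b/2)^2 * (1/a)^2) * ((2*(n:ℝ)+2*σ) * (2*(n:ℝ)+1+2*σ))
          / (((n:ℝ)+1) * ((n:ℝ)+1)) := by
          apply div_le_div_of_nonneg_left hnum hd1 hd2
    _ = ((b/2)^2 * (1/a)^2) * ((2*(n:ℝ)+2*σ)/((n:ℝ)+1)) * ((2*(n:ℝ)+1+2*σ)/((n:ℝ)+1)) := by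
          simp only [div_eq_mul_inv, mul_inv]
          ring
  have hqt : Filter.Tendsto q Filter.atTop (nhds (((b/2)^2 * (1/a)^2) * 2 * 2)) := by
    have t1 : Filter.Tendsto (fun n : ℕ => (2*(n:ℝ)+2*σ)/((n:ℝ)+1)) Filter.atTop (nhds 2) := by
      have := (tendsto_ratio σ 1).const_mul 2
      rw [mul_one] at this
      apply this.congr
      intro n
      field_simp
    have t2 : Filter.Tendsto (fun n : ℕ => (2*(n:ℝ)+1+2*σ)/((n:ℝ)+1)) Filter.atTop (nhds 2) := by
      have := (tendsto_ratio (σ + 1/2) 1).const_mul 2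
      rw [mul_one] at this
      apply this.congr
      intro n
      field_simp
      ring
    exact ((tendsto_const_nhds.mul t1).mul t2)
  have hL : ((b/2)^2 * (1/a)^2) * 2 * 2 < 1 := by
    have : ((b/2)^2 * (1/a)^2) * 2 * 2 = (b/a)^2 := by
      field_simp
    rw [this]
    have h1 : b/a < 1 := (div_lt_one ha).mpr hab
    have h2 : 0 ≤ b/a := by positivity
    nlinarith
  have hsum : Summable (fun n => ∫ t in Set.Ioi (0:ℝ), ‖g n t‖) := by
    have : (fun n => ∫ t in Set.Ioi (0:ℝ), ‖g n t‖) = F := by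
      funext n
      rw [hnorm n, hCnorm n, hF]
    rw [this]
    exact summable_of_ratio_tendsto hFnonneg hL hqt (Filter.Eventually.of_forall hineq)
  have hswap := MeasureTheory.integral_tsum_of_summable_integral_norm hint hsum
  -- pointwise identity
  have hA : ∀ t ∈ Set.Ioi (0:ℝ),
      Complex.exp (-((a:ℝ):ℂ) * t) * besselI ν (b*t) * (t:ℂ) ^ ν = ∑' n, g n t := by
    intro t ht
    rw [besselI]
    calc Complex.exp (-((a:ℝ):ℂ) * t) * (∑' n : ℕ, ((b * t / 2 : ℝ):ℂ) ^ (2 * (n:ℂ) + ν) /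
          ((n.factorial : ℂ) * Complex.Gamma (ν + n + 1))) * (t:ℂ) ^ ν
        = (Complex.exp (-((a:ℝ):ℂ) * t) * (t:ℂ) ^ ν) * (∑' n : ℕ, ((b * t / 2 : ℝ):ℂ) ^ (2 * (n:ℂ) + ν) /
          ((n.factorial : ℂ) * Complex.Gamma (ν + n + 1))) := by ring
    _ = ∑' n : ℕ, (Complex.exp (-((a:ℝ):ℂ) * t) * (t:ℂ) ^ ν) * (((b * t / 2 : ℝ):ℂ) ^ (2 * (n:ℂ) + ν) /
          ((n.factorial : ℂ) * Complex.Gamma (ν + n + 1))) := tsum_mul_left.symm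
    _ = ∑' n, g n t := by
          apply tsum_congr
          intro n
          rw [hg]
          simp only
          ring
  -- gather everything
  set p : ℝ := (b/a)^2 with hp
  have hp0 : 0 ≤ p := by positivity
  have hp1 : p < 1 := by
    have h1 : b/a < 1 := (div_lt_one ha).mpr hab
    have h2 : 0 ≤ b/a := by positivity
    rw [hp]; nlinarith
  have hsre : 0 < s.re := by rw [← hσ]; linarith
  set K : ℂ := ((b/2:ℝ):ℂ)^ν * ((a⁻¹:ℝ):ℂ)^(2*s) * (2:ℂ)^(2*s-1)
      / ((Real.sqrt Real.pi : ℝ):ℂ) with hK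
  have hsqne : ((Real.sqrt Real.pi : ℝ):ℂ) ≠ 0 := by
    simp only [ne_eq, Complex.ofReal_eq_zero]
    positivity
  have hGh_ne : ∀ n : ℕ, Complex.Gamma (s + (n:ℂ) + 1/2) ≠ 0 := by
    intro n
    apply Complex.Gamma_ne_zero_of_re_pos
    simp [Complex.add_re, Complex.div_re]
    norm_num
    linarith
  have hT : ∀ n : ℕ, C n * ((1 / (a:ℂ)) ^ (w n) * Complex.Gamma (w n))
      = K * ((p:ℂ)^n * Complex.Gamma (s + n) / (n.factorial : ℂ)) := by
    intro n
    have h2ne : (2:ℂ) ^ (1 - 2*(s+(n:ℂ))) ≠ 0 := by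
      simp [Complex.cpow_eq_zero_iff]
    have h2inv : ((2:ℂ) ^ (1 - 2*(s+(n:ℂ))))⁻¹ = (2:ℂ) ^ (2*(s+(n:ℂ)) - 1) := by
      rw [← Complex.cpow_neg]
      congr 1
      ring
    have h2z : Complex.Gamma (w n) = Complex.Gamma (s+n) * Complex.Gamma (s+(n:ℂ)+1/2)
        * (2:ℂ)^(2*(s+(n:ℂ))-1) / ((Real.sqrt Real.pi : ℝ):ℂ) := by
      have dup := Complex.Gamma_mul_Gamma_add_half (s+(n:ℂ))
      have hwn : w n = 2*(s+(n:ℂ)) := by rw [hw]; ring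
      have hone : (2:ℂ)^(1-2*(s+(n:ℂ))) * (2:ℂ)^(2*(s+(n:ℂ))-1) = 1 := by
        rw [← Complex.cpow_add _ _ two_ne_zero,
          show (1-2*(s+(n:ℂ))) + (2*(s+(n:ℂ))-1) = 0 by ring, Complex.cpow_zero]
      calc Complex.Gamma (w n) = Complex.Gamma (2*(s+(n:ℂ))) := by rw [hwn]
      _ = Complex.Gamma (2*(s+(n:ℂ))) * ((2:ℂ)^(1-2*(s+(n:ℂ))) * (2:ℂ)^(2*(s+(n:ℂ))-1)) := by
            rw [hone, mul_one]
      _ = (Complex.Gamma (2*(s+(n:ℂ))) * (2:ℂ)^(1-2*(s+(n:ℂ))) * ((Real.sqrt Real.pi : ℝ):ℂ))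
            * (2:ℂ)^(2*(s+(n:ℂ))-1) / ((Real.sqrt Real.pi : ℝ):ℂ) := by
            rw [mul_comm]
            rw [eq_div_iff hsqne]
            ring
      _ = Complex.Gamma (s+n) * Complex.Gamma (s+(n:ℂ)+1/2)
            * (2:ℂ)^(2*(s+(n:ℂ))-1) / ((Real.sqrt Real.pi : ℝ):ℂ) := by rw [← dup]
    have hGν : Complex.Gamma (ν + n + 1) = Complex.Gamma (s + (n:ℂ) + 1/2) := by
      rw [hν]; congr 1; ring
    have hfne : ((n.factorial : ℂ)) ≠ 0 := by exact_mod_cast (Nat.cast_ne_zero (R := ℂ)).mpr n.factorial_pos.ne'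
    have hia : (1/(a:ℂ)) = ((a⁻¹:ℝ):ℂ) := by push_cast; ring
    have hE : ((b/2:ℝ):ℂ)^(2*(n:ℂ)+ν) * ((a⁻¹:ℝ):ℂ)^(w n) * (2:ℂ)^(2*(s+(n:ℂ))-1)
        = ((b/2:ℝ):ℂ)^ν * ((a⁻¹:ℝ):ℂ)^(2*s) * (2:ℂ)^(2*s-1) * (p:ℂ)^n := by
      have h2c : (2:ℂ) = ((2:ℝ):ℂ) := by norm_num
      have hpn : (p:ℂ)^n = ((p:ℝ):ℂ)^((n:ℕ):ℂ) := (Complex.cpow_natCast _ n).symm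
      rw [h2c, hpn]
      rw [cpow_pos_eq_exp (by positivity : (0:ℝ) < b/2), cpow_pos_eq_exp (by positivity : (0:ℝ) < b/2),
        cpow_pos_eq_exp (by positivity : (0:ℝ) < a⁻¹), cpow_pos_eq_exp (by positivity : (0:ℝ) < a⁻¹),
        cpow_pos_eq_exp (by norm_num : (0:ℝ) < 2), cpow_pos_eq_exp (by norm_num : (0:ℝ) < 2),
        cpow_pos_eq_exp (by positivity : (0:ℝ) < p)]
      rw [← Complex.exp_add, ← Complex.exp_add, ← Complex.exp_add, ← Complex.exp_add,
        ← Complex.exp_add]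
      congr 1
      have l1 : Real.log (b/2) = Real.log b - Real.log 2 := Real.log_div hb.ne' two_ne_zero
      have l2 : Real.log (a⁻¹) = -Real.log a := Real.log_inv a
      have l3 : Real.log p = 2*(Real.log b - Real.log a) := by
        rw [hp, Real.log_pow, Real.log_div hb.ne' ha.ne']
        push_cast
        ring
      rw [l1, l2, l3, hν, hw]
      push_cast
      ring
    calc C n * ((1 / (a:ℂ)) ^ (w n) * Complex.Gamma (w n))
        = (((b/2:ℝ):ℂ)^(2*(n:ℂ)+ν) * ((a⁻¹:ℝ):ℂ)^(w n) * (2:ℂ)^(2*(s+(n:ℂ))-1))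
          * (Complex.Gamma (s+n) / ((n.factorial : ℂ) * ((Real.sqrt Real.pi : ℝ):ℂ))) := by
          rw [h2z, hia, hC]
          simp only
          rw [hGν]
          have hcancel : Complex.Gamma (s+(n:ℂ)+1/2) * (Complex.Gamma (s+(n:ℂ)+1/2))⁻¹ = 1 :=
            mul_inv_cancel₀ (hGh_ne n)
          linear_combination (((b/2:ℝ):ℂ)^(2*(n:ℂ)+ν) * ((a⁻¹:ℝ):ℂ)^(w n)
            * (2:ℂ)^(2*(s+(n:ℂ))-1) * Complex.Gamma (s+(n:ℂ)) * ((n.factorial : ℂ))⁻¹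
            * (((Real.sqrt Real.pi : ℝ):ℂ))⁻¹) * hcancel
    _ = (((b/2:ℝ):ℂ)^ν * ((a⁻¹:ℝ):ℂ)^(2*s) * (2:ℂ)^(2*s-1) * (p:ℂ)^n)
          * (Complex.Gamma (s+n) / ((n.factorial : ℂ) * ((Real.sqrt Real.pi : ℝ):ℂ))) := by
          rw [hE]
    _ = K * ((p:ℂ)^n * Complex.Gamma (s + n) / (n.factorial : ℂ)) := by
          rw [hK]
          simp only [div_eq_mul_inv, mul_inv]
          ring
  have hsumval : ∑' n, ∫ t in Set.Ioi (0:ℝ), g n t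
      = K * (((1 - p : ℝ):ℂ) ^ (-s) * Complex.Gamma s) := by
    rw [funext hval, funext hT, tsum_mul_left, binom hp0 hp1 hsre]
  rw [setIntegral_congr_fun measurableSet_Ioi hA, ← hswap, hsumval]
  -- final assembly
  have hP : 0 < (a+b)*(a-b) := by nlinarith
  have h1p : (1 - p : ℝ) = ((a+b)*(a-b)) / a^2 := by
    rw [hp]
    field_simp
    ring
  rw [h1p, hK]
  have l4 : Real.log (((a+b)*(a-b)) / a^2) = Real.log ((a+b)*(a-b)) - 2 * Real.log a := by
    rw [Real.log_div hP.ne' (by positivity), Real.log_pow]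
    push_cast
    ring
  have l5 : Real.log (2*b) = Real.log 2 + Real.log b := Real.log_mul two_ne_zero hb.ne'
  have l1 : Real.log (b/2) = Real.log b - Real.log 2 := Real.log_div hb.ne' two_ne_zero
  have l2 : Real.log (a⁻¹) = -Real.log a := Real.log_inv a
  have h2c : (2:ℂ) = ((2:ℝ):ℂ) := by norm_num
  have hGs_ne : Complex.Gamma s ≠ 0 := Complex.Gamma_ne_zero_of_re_pos hsre
  rw [h2c, cpow_pos_eq_exp (by positivity : (0:ℝ) < 2*b),
    cpow_pos_eq_exp (by positivity : (0:ℝ) < b/2),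
    cpow_pos_eq_exp (by positivity : (0:ℝ) < a⁻¹),
    cpow_pos_eq_exp (by norm_num : (0:ℝ) < 2),
    cpow_pos_eq_exp (by positivity : (0:ℝ) < ((a+b)*(a-b)) / a^2),
    cpow_pos_eq_exp hP]
  rw [l4, l5, l1, l2]
  have assemble : ∀ (pc G X Y Z W : ℂ), pc ≠ 0 → G ≠ 0 → X * Y * Z = W →
      X * pc / G * (Y / pc * (Z * G)) = W := by
    intro pc G X Y Z W hpc hG h
    have e : X * pc / G * (Y / pc * (Z * G)) = X * Y * Z * (pc / pc) * (G / G) := by ring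
    rw [e, div_self hpc, div_self hG, mul_one, mul_one, h]
  apply assemble _ _ _ _ _ _ hsqne hGs_ne
  rw [← Complex.exp_add, ← Complex.exp_add, ← Complex.exp_add, ← Complex.exp_add]
  congr 1
  rw [hν]
  push_cast
  ring

end BRAux

namespace BRAux
open Filter

set_option maxHeartbeats 1000000 in
lemma edge {b : ℝ} (hb : 0 < b) {s : ℂ} (hs : 1/2 < s.re) :
    ∫ t in Set.Ioi (0:ℝ),
      Complex.exp (-((b:ℝ):ℂ) * t) * besselI (s - 1/2) (b * t) * (t:ℂ) ^ (s - 1/2) = 0 := by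
  set f0 : ℝ → ℂ := fun t => Complex.exp (-((b:ℝ):ℂ) * t) * besselI (s - 1/2) (b * t)
      * (t:ℂ) ^ (s - 1/2) with hf0
  by_cases hI : IntegrableOn f0 (Set.Ioi 0)
  swap
  · exact integral_undef hI
  exfalso
  set σ : ℝ := s.re with hσ
  set Coef : ℂ := ((2*b : ℝ):ℂ) ^ ((1:ℂ)/2 - s) * (Real.sqrt Real.pi : ℂ) / Complex.Gamma s
    with hCoef
  have hsqne : ((Real.sqrt Real.pi : ℝ):ℂ) ≠ 0 := by
    simp only [ne_eq, Complex.ofReal_eq_zero]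
    positivity
  have hCne : Coef ≠ 0 := by
    rw [hCoef]
    apply div_ne_zero
    · apply mul_ne_zero _ hsqne
      intro h
      rw [Complex.cpow_eq_zero_iff] at h
      have := h.1
      simp only [Complex.ofReal_eq_zero] at this
      linarith
    · exact Complex.Gamma_ne_zero_of_re_pos (by linarith)
  set M : ℝ := ∫ t in Set.Ioi (0:ℝ), ‖f0 t‖ with hM
  have hbound : ∀ l : ℝ, 0 < l → ‖Coef‖⁻¹ * (((l+b)+b)*((l+b)-b)) ^ (-σ) ≤ M := by
    intro l hl
    set fl : ℝ → ℂ := fun t => Complex.exp (-(((l+b) : ℝ):ℂ) * t) * besselI (s - 1/2) (b * t)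
        * (t:ℂ) ^ (s - 1/2) with hfl
    have hsplit : ∀ t : ℝ, fl t = Complex.exp (-((l:ℝ):ℂ) * t) * f0 t := by
      intro t
      rw [hfl, hf0]
      simp only
      rw [show (-(((l+b):ℝ):ℂ) * t) = (-((l:ℝ):ℂ) * t) + (-((b:ℝ):ℂ) * t) by push_cast; ring,
        Complex.exp_add]
      ring
    have hmeas : AEStronglyMeasurable fl (volume.restrict (Set.Ioi 0)) := by
      rw [funext hsplit]
      exact ((Complex.continuous_exp.comp (by continuity)).aestronglyMeasurable).mul hI.1
    have hle : ∀ᵐ t ∂(volume.restrict (Set.Ioi (0:ℝ))), ‖fl t‖ ≤ ‖f0 t‖ := by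
      filter_upwards [ae_restrict_mem measurableSet_Ioi] with t ht
      rw [Set.mem_Ioi] at ht
      rw [hsplit t, norm_mul]
      have h1 : ‖Complex.exp (-((l:ℝ):ℂ) * t)‖ ≤ 1 := by
        rw [Complex.norm_exp]
        rw [Real.exp_le_one_iff]
        have : (-((l:ℝ):ℂ) * t).re = -(l*t) := by
          simp [Complex.neg_re, Complex.mul_re]
        rw [this]
        nlinarith
      calc ‖Complex.exp (-((l:ℝ):ℂ) * t)‖ * ‖f0 t‖ ≤ 1 * ‖f0 t‖ :=
            mul_le_mul_of_nonneg_right h1 (norm_nonneg _)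
      _ = ‖f0 t‖ := one_mul _
    have hIl : IntegrableOn fl (Set.Ioi 0) := Integrable.mono' hI.norm hmeas hle
    have hkey := key hb (show b < l + b by linarith) hs
    have hval : ∫ t in Set.Ioi (0:ℝ), fl t
        = Coef⁻¹ * (((((l+b)+b)*((l+b)-b)) : ℝ):ℂ) ^ (-s) := by
      rw [eq_inv_mul_iff_mul_eq₀ hCne, hCoef, hfl]
      exact hkey
    have hPpos : 0 < ((l+b)+b)*((l+b)-b) := by nlinarith
    have hnormval : ‖∫ t in Set.Ioi (0:ℝ), fl t‖
        = ‖Coef‖⁻¹ * (((l+b)+b)*((l+b)-b)) ^ (-σ) := by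
      rw [hval, norm_mul, norm_inv]
      congr 1
      rw [norm_cpow_eq_rpow_re_of_pos hPpos (-s)]
      simp [Complex.neg_re, hσ]
    rw [← hnormval]
    calc ‖∫ t in Set.Ioi (0:ℝ), fl t‖ ≤ ∫ t in Set.Ioi (0:ℝ), ‖fl t‖ :=
          norm_integral_le_integral_norm _
    _ ≤ M := by
          rw [hM]
          exact integral_mono_ae hIl.norm hI.norm hle
  -- contradiction via tendsto
  have hinv : Tendsto (fun x : ℝ => x ^ (-σ)) (nhdsWithin 0 (Set.Ioi 0)) atTop := by
    have h1 : Tendsto (fun x : ℝ => (x⁻¹) ^ σ) (nhdsWithin 0 (Set.Ioi 0)) atTop :=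
      (tendsto_rpow_atTop (by linarith : 0 < σ)).comp tendsto_inv_nhdsGT_zero
    apply h1.congr'
    filter_upwards [self_mem_nhdsWithin] with x hx
    rw [Set.mem_Ioi] at hx
    rw [Real.inv_rpow hx.le, ← Real.rpow_neg hx.le]
  have hPt : Tendsto (fun l : ℝ => ((l+b)+b)*((l+b)-b)) (nhdsWithin 0 (Set.Ioi 0))
      (nhdsWithin 0 (Set.Ioi 0)) := by
    rw [tendsto_nhdsWithin_iff]
    constructor
    · apply tendsto_nhdsWithin_of_tendsto_nhds
      have : Continuous (fun l : ℝ => ((l+b)+b)*((l+b)-b)) := by continuity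
      have h0 := this.tendsto 0
      simpa using h0
    · filter_upwards [self_mem_nhdsWithin] with l hl
      rw [Set.mem_Ioi] at hl ⊢
      nlinarith
  have hT : Tendsto (fun l : ℝ => ‖Coef‖⁻¹ * (((l+b)+b)*((l+b)-b)) ^ (-σ))
      (nhdsWithin 0 (Set.Ioi 0)) atTop := by
    apply Tendsto.const_mul_atTop (inv_pos.mpr (norm_pos_iff.mpr hCne))
    exact hinv.comp hPt
  obtain ⟨l, hl1, hl2⟩ := ((hT.eventually_gt_atTop M).and self_mem_nhdsWithin).exists
  exact absurd (hbound l hl2) (not_le.mpr hl1)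

end BRAux


/-- For b₋ > 0, b₊ ≥ b₋, λ ≥ 0 and s ∈ ℂ with Re s > 1/2, writing
b₁ = b₊+b₋ and b₂ = b₊-b₋:
((λ+b₊)² - b₋²)^{-s} = (λ+b₁)^{-s}(λ+b₂)^{-s}, and
(2b₋)^{1/2-s} √π/Γ(s) · ∫_0^∞ e^{-(λ+b₊)t} I_{s-1/2}(b₋t) t^{s-1/2} dt
  = ((λ+b₁)(λ+b₂))^{-s}. -/
theorem bessel_representation_of_product_power
    (bp bm lam : ℝ) (hbm : 0 < bm) (hbp : bm ≤ bp) (hlam : 0 ≤ lam)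
    (s : ℂ) (hs : 1 / 2 < s.re) :
    ((((lam + bp) ^ 2 - bm ^ 2 : ℝ) : ℂ) ^ (-s) =
        ((lam + (bp + bm) : ℝ) : ℂ) ^ (-s) * ((lam + (bp - bm) : ℝ) : ℂ) ^ (-s)) ∧
      ((2 * bm : ℝ) : ℂ) ^ ((1 : ℂ) / 2 - s) * (Real.sqrt Real.pi : ℂ) /
            Complex.Gamma s *
          (∫ t in Set.Ioi (0 : ℝ),
            Complex.exp (-((lam + bp : ℝ) : ℂ) * t) * besselI (s - 1 / 2) (bm * t) *
              (t : ℂ) ^ (s - 1 / 2)) =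
        (((lam + (bp + bm)) * (lam + (bp - bm)) : ℝ) : ℂ) ^ (-s) := by
  constructor
  · rw [show ((lam + bp) ^ 2 - bm ^ 2 : ℝ) = (lam + (bp + bm)) * (lam + (bp - bm)) by ring,
      Complex.ofReal_mul]
    exact mul_cpow_ofReal_nonneg (by linarith) (by linarith) (-s)
  · rcases lt_or_eq_of_le (show bm ≤ lam + bp by linarith) with hlt | heq
    · rw [show ((lam + (bp + bm)) * (lam + (bp - bm)) : ℝ)
        = (((lam + bp) + bm) * ((lam + bp) - bm)) by ring]
      exact BRAux.key hbm hlt hs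
    · have h0 : lam = 0 := by linarith
      have hbp' : bp = bm := by linarith
      rw [show ((lam + bp : ℝ)) = bm by linarith, BRAux.edge hbm hs, mul_zero,
        show ((lam + (bp + bm)) * (lam + (bp - bm)) : ℝ) = 0 by rw [h0, hbp']; ring,
        Complex.ofReal_zero, Complex.zero_cpow]
      intro h
      rw [neg_eq_zero] at h
      rw [h] at hs
      norm_num at hs
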